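/- For any j ≠ j' ∈ [d] and l,l' ∈ {1,…,m+1}, the compression ⟨j'| Π_sym^{d,m+1} |j⟩ of the symmetric projector onto computational basis states of the first factor satisfies: (|j'⟩⟨j'| ⊗ I) Π_sym^{d,m+1} (|j⟩⟨j| ⊗ I) = |j'⟩⟨j| ⊗ Σ_{l,l'≥1}^{m+1} √(l/(m+1)) √(l'/(m+1)) Σ_{t⃗ ∈ T^{m+1}_{(j',l'),(j,l)}} |s(t⃗_{-j'})⟩⟨s(t⃗_{-j})|. -/

import Mathlib

open scoped BigOperators Matrix

noncomputable def tensPow (α : Type*) (m : ℕ) (φ : α → ℂ) :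
    EuclideanSpace ℂ (Fin m → α) := WithLp.toLp 2 (fun j => ∏ k, φ (j k))

noncomputable def symSubspace (α : Type*) (m : ℕ) :
    Submodule ℂ (EuclideanSpace ℂ (Fin m → α)) :=
  Submodule.span ℂ (Set.range (tensPow α m))

/-- Matrix of the orthogonal projector onto the symmetric subspace of `(ℂ^α)^{⊗m}`. -/
noncomputable def symProj (α : Type*) [Fintype α] [DecidableEq α] (m : ℕ) :
    Matrix (Fin m → α) (Fin m → α) ℂ :=
  fun a b => (inner ℂ (EuclideanSpace.single a (1:ℂ))
    ((Submodule.orthogonalProjection (symSubspace α m) (EuclideanSpace.single b (1:ℂ)) :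
      symSubspace α m) : EuclideanSpace ℂ (Fin m → α)) : ℂ)

def typeOf {α : Type*} [Fintype α] [DecidableEq α] {m : ℕ} (j : Fin m → α) : α → ℕ :=
  fun i => (Finset.univ.filter (fun k => j k = i)).card

def Idm (α : Type*) [Fintype α] [DecidableEq α] (m : ℕ) : Finset (α → ℕ) :=
  ((Finset.univ : Finset (α → Fin (m+1))).image (fun f i => (f i : ℕ))).filter
    (fun t => ∑ i, t i = m)

noncomputable def typeVec (α : Type*) [Fintype α] [DecidableEq α] (m : ℕ) (t : α → ℕ) :
    EuclideanSpace ℂ (Fin m → α) :=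
  WithLp.toLp 2 (fun j => if typeOf j = t then ((((Real.sqrt (Nat.multinomial Finset.univ t))⁻¹ : ℝ)) : ℂ)
    else 0)

def decr {α : Type*} [DecidableEq α] (t : α → ℕ) (k : α) : α → ℕ :=
  Function.update t k (t k - 1)

/-- `|j⟩⟨j| ⊗ I`: projector onto basis state `j` of the first tensor factor. -/
def projFirst (α : Type*) [DecidableEq α] (m : ℕ) (j : α) :
    Matrix (Fin (m+1) → α) (Fin (m+1) → α) ℂ :=
  Matrix.diagonal (fun a => if a 0 = j then 1 else 0)

/-- The vector `|j⟩ ⊗ |s(t⃗)⟩` in `(ℂ^α)^{⊗(m+1)}`. -/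
noncomputable def basisTensTypeVec (α : Type*) [Fintype α] [DecidableEq α] (m : ℕ)
    (j : α) (t : α → ℕ) : (Fin (m+1) → α) → ℂ :=
  fun a => (if a 0 = j then (1 : ℂ) else 0) * typeVec α m t (fun i => a i.succ)

section Aux

variable {α : Type*} [Fintype α] [DecidableEq α]

variable {α : Type*} [Fintype α] [DecidableEq α]

lemma sum_typeOf {m : ℕ} (a : Fin m → α) : ∑ i, typeOf a i = m := by
  classical
  have := Finset.card_eq_sum_card_fiberwise (s := (Finset.univ : Finset (Fin m)))
    (t := (Finset.univ : Finset α)) (f := fun k => a k) (fun x _ => Finset.mem_univ _)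
  simpa [typeOf] using this.symm

lemma mem_Idm_iff {m : ℕ} (t : α → ℕ) : t ∈ Idm α m ↔ ∑ i, t i = m := by
  unfold Idm
  simp only [Finset.mem_filter, Finset.mem_image, Finset.mem_univ, true_and]
  constructor
  · rintro ⟨_, h⟩; exact h
  · intro h
    refine ⟨⟨fun i => ⟨t i, ?_⟩, ?_⟩, h⟩
    · have : t i ≤ m := h ▸ Finset.single_le_sum (f := t) (fun _ _ => Nat.zero_le _)
        (Finset.mem_univ i)
      omega
    · funext i; rfl

lemma typeOf_mem_Idm {m : ℕ} (a : Fin m → α) : typeOf a ∈ Idm α m :=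
  (mem_Idm_iff _).mpr (sum_typeOf a)

lemma typeOf_succ {m : ℕ} (a : Fin (m+1) → α) (k : α) :
    typeOf a k = (if a 0 = k then 1 else 0) + typeOf (fun x : Fin m => a x.succ) k := by
  unfold typeOf
  rw [Finset.card_filter, Finset.card_filter, Fin.sum_univ_succ]

lemma one_le_typeOf_self {m : ℕ} (a : Fin (m+1) → α) : 1 ≤ typeOf a (a 0) := by
  rw [typeOf_succ]; simp

lemma typeOf_tail_eq {m : ℕ} (a : Fin (m+1) → α) (t : α → ℕ) (ht : 1 ≤ t (a 0))
    (h : typeOf (fun x : Fin m => a x.succ) = decr t (a 0)) : typeOf a = t := by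
  funext k
  rw [typeOf_succ, h]
  unfold decr
  by_cases hk : k = a 0
  · subst hk; rw [Function.update_self, if_pos rfl]; omega
  · rw [Function.update_of_ne hk, if_neg (fun h' => hk h'.symm)]; omega

lemma tail_typeOf_eq {m : ℕ} (a : Fin (m+1) → α) :
    typeOf (fun x : Fin m => a x.succ) = decr (typeOf a) (a 0) := by
  funext k
  unfold decr
  by_cases hk : k = a 0
  · subst hk
    rw [Function.update_self]
    have := typeOf_succ a (a 0)
    rw [if_pos rfl] at this
    omega
  · rw [Function.update_of_ne hk]
    have := typeOf_succ a k
    rw [if_neg (fun h' => hk h'.symm)] at this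
    omega

lemma sum_decr {m : ℕ} (t : α → ℕ) (ht : ∑ i, t i = m + 1) (k : α) (hk : 1 ≤ t k) :
    ∑ i, decr t k i = m := by
  unfold decr
  rw [Finset.sum_update_of_mem (Finset.mem_univ k), Finset.sdiff_singleton_eq_erase]
  rw [← Finset.sum_erase_add _ _ (Finset.mem_univ k)] at ht
  omega

lemma prod_factorial_decr (t : α → ℕ) (k : α) (hk : 1 ≤ t k) :
    ∏ i, Nat.factorial (t i) = t k * ∏ i, Nat.factorial (decr t k i) := by
  rw [← Finset.mul_prod_erase _ _ (Finset.mem_univ k), ← Finset.mul_prod_erase _ (fun i => Nat.factorial (decr t k i)) (Finset.mem_univ k)]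
  have h1 : decr t k k = t k - 1 := Function.update_self _ _ _
  have h2 : ∀ i ∈ Finset.univ.erase k, Nat.factorial (decr t k i) = Nat.factorial (t i) := by
    intro i hi
    rw [decr, Function.update_of_ne (Finset.mem_erase.mp hi).1]
  rw [Finset.prod_congr rfl h2, h1, ← mul_assoc]
  congr 1
  rw [← Nat.succ_pred_eq_of_pos hk, Nat.factorial_succ]
  simp [Nat.succ_pred_eq_of_pos hk]

lemma multinomial_decr {m : ℕ} (t : α → ℕ) (ht : ∑ i, t i = m + 1) (k : α) (hk : 1 ≤ t k) :
    Nat.multinomial Finset.univ t * t k = (m + 1) * Nat.multinomial Finset.univ (decr t k) := by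
  have hP : 0 < ∏ i, Nat.factorial (decr t k i) :=
    Finset.prod_pos fun i _ => Nat.factorial_pos _
  apply Nat.eq_of_mul_eq_mul_right hP
  have spec1 := Nat.multinomial_spec Finset.univ t
  have spec2 := Nat.multinomial_spec Finset.univ (decr t k)
  rw [ht] at spec1
  rw [sum_decr t ht k hk] at spec2
  have h1 : Nat.multinomial Finset.univ t * t k * (∏ i, Nat.factorial (decr t k i))
      = Nat.multinomial Finset.univ t * (∏ i, Nat.factorial (t i)) := by
    rw [prod_factorial_decr t k hk]; ring
  rw [h1, mul_comm, spec1, Nat.factorial_succ, ← spec2]; ring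

lemma card_typeOf {m : ℕ} (t : α → ℕ) (ht : ∑ i, t i = m) :
    (Finset.univ.filter (fun a : Fin m → α => typeOf a = t)).card
      = Nat.multinomial Finset.univ t := by
  induction m generalizing t with
  | zero =>
    have h0 : ∀ i ∈ Finset.univ, t i = 0 := Finset.sum_eq_zero_iff.mp ht
    have htf : t = fun _ => 0 := funext fun i => h0 i (Finset.mem_univ i)
    subst htf
    have hall : ∀ a : Fin 0 → α, typeOf a = fun _ => (0:ℕ) := by
      intro a; funext i; simp [typeOf]
    rw [Finset.filter_true_of_mem (fun a _ => hall a)]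
    have hmult := Nat.multinomial_spec (Finset.univ : Finset α) (fun _ => (0:ℕ))
    simp at hmult ⊢
    omega
  | succ m ih =>
    rw [Finset.card_eq_sum_card_fiberwise (s := Finset.univ.filter (fun a : Fin (m+1) → α => typeOf a = t))
      (t := (Finset.univ : Finset α)) (f := fun a => a 0) (fun x _ => Finset.mem_univ _)]
    have key : ∀ i : α,
        ((Finset.univ.filter fun a : Fin (m+1) → α => typeOf a = t).filter fun a => a 0 = i).card
          = if 1 ≤ t i then Nat.multinomial Finset.univ (decr t i) else 0 := by
      intro i
      by_cases hi : 1 ≤ t i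
      · rw [if_pos hi, ← ih (decr t i) (sum_decr t ht i hi)]
        apply Finset.card_nbij' (i := fun a => fun x : Fin m => a x.succ)
          (j := fun b => Fin.cons i b)
        · intro a ha
          simp only [Finset.mem_coe, Finset.mem_filter, Finset.mem_univ, true_and] at ha ⊢
          rw [tail_typeOf_eq, ha.2, ha.1]
        · intro b hb
          simp only [Finset.mem_coe, Finset.mem_filter, Finset.mem_univ, true_and] at hb ⊢
          have h0 : (Fin.cons i b : Fin (m+1) → α) 0 = i := rfl
          refine ⟨typeOf_tail_eq _ t (by rw [h0]; exact hi) ?_, h0⟩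
          have hb' : (fun x : Fin m => (Fin.cons i b : Fin (m+1) → α) x.succ) = b := by
            funext x; simp
          rw [hb', h0, hb]
        · intro a ha
          simp only [Finset.mem_coe, Finset.mem_filter, Finset.mem_univ, true_and] at ha
          funext x
          refine Fin.cases ?_ (fun y => ?_) x
          · simp [ha.2]
          · simp
        · intro b _
          funext x; simp
      · rw [if_neg hi]
        rw [Finset.card_eq_zero, Finset.filter_filter, Finset.filter_eq_empty_iff]
        rintro a -
        rintro ⟨h1, h2⟩
        rw [← h2] at hi
        rw [← h1] at hi
        exact hi (one_le_typeOf_self a)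
    rw [Finset.sum_congr rfl (fun i _ => key i)]
    apply Nat.eq_of_mul_eq_mul_left (Nat.succ_pos m)
    rw [Finset.mul_sum]
    have hterm : ∀ i : α, (m+1) * (if 1 ≤ t i then Nat.multinomial Finset.univ (decr t i) else 0)
        = Nat.multinomial Finset.univ t * t i := by
      intro i
      by_cases hi : 1 ≤ t i
      · rw [if_pos hi, ← multinomial_decr t ht i hi]
      · rw [if_neg hi]; have : t i = 0 := by omega
        rw [this, mul_zero, mul_zero]
    rw [Finset.sum_congr rfl (fun i _ => hterm i), ← Finset.mul_sum, ht, Nat.succ_eq_add_one]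
    ring

lemma prod_pow_typeOf {m : ℕ} (a : Fin m → α) (φ : α → ℂ) :
    ∏ k, φ (a k) = ∏ i, φ i ^ typeOf a i := by
  rw [← Finset.prod_fiberwise_of_maps_to (g := fun k => a k) (t := (Finset.univ : Finset α))
    (fun x _ => Finset.mem_univ _) (fun k => φ (a k))]
  refine Finset.prod_congr rfl fun i _ => ?_
  rw [show typeOf a i = (Finset.univ.filter fun k => a k = i).card from rfl,
    ← Finset.prod_const]
  exact Finset.prod_congr rfl fun k hk => by rw [(Finset.mem_filter.mp hk).2]

lemma sqrt_mult_pos (t : α → ℕ) : 0 < Real.sqrt (Nat.multinomial Finset.univ t) :=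
  Real.sqrt_pos.mpr (by exact_mod_cast Nat.multinomial_pos _ _)

lemma tensPow_eq_sum {m : ℕ} (φ : α → ℂ) :
    tensPow α m φ = ∑ t ∈ Idm α m,
      ((∏ i, φ i ^ t i) * ((Real.sqrt (Nat.multinomial Finset.univ t) : ℝ) : ℂ)) •
        typeVec α m t := by
  ext a
  have h1 : (∑ t ∈ Idm α m,
      ((∏ i, φ i ^ t i) * ((Real.sqrt (Nat.multinomial Finset.univ t) : ℝ) : ℂ)) •
        typeVec α m t) a
      = ∑ t ∈ Idm α m,
      ((∏ i, φ i ^ t i) * ((Real.sqrt (Nat.multinomial Finset.univ t) : ℝ) : ℂ)) *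
        typeVec α m t a := by
    rw [WithLp.ofLp_sum, Finset.sum_apply]; rfl
  rw [h1, Finset.sum_eq_single_of_mem (typeOf a) (typeOf_mem_Idm a)]
  · rw [show typeVec α m (typeOf a) a
        = ((((Real.sqrt (Nat.multinomial Finset.univ (typeOf a)))⁻¹ : ℝ)) : ℂ) from if_pos rfl]
    rw [show (tensPow α m φ) a = ∏ k, φ (a k) from rfl, prod_pow_typeOf]
    have hs := (sqrt_mult_pos (α := α) (typeOf a)).ne'
    field_simp
    rw [Complex.ofReal_div, Complex.ofReal_one, mul_assoc, mul_one_div_cancel (by exact_mod_cast hs), mul_one]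
  · intro t _ hne
    rw [show typeVec α m t a = 0 from if_neg (fun h => hne h.symm), mul_zero]

lemma typeVec_mem_symSubspace {m : ℕ} (t : α → ℕ) (ht : t ∈ Idm α m) :
    typeVec α m t ∈ symSubspace α m := by
  classical
  set Ψ : (α → ℂ) → EuclideanSpace ℂ (Idm α m) :=
    fun φ => WithLp.toLp 2 (fun s => ∏ i, φ i ^ (s : α → ℕ) i) with hΨdef
  have hspan : Submodule.span ℂ (Set.range Ψ) = ⊤ := by
    rw [← Submodule.orthogonal_eq_bot_iff, Submodule.eq_bot_iff]
    intro c hc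
    have hc' : ∀ ψ : α → ℂ, ∑ s : Idm α m, (∏ i, ψ i ^ (s : α → ℕ) i) * c s = 0 := by
      intro ψ
      have h1 := (Submodule.mem_orthogonal _ c).mp hc (Ψ (fun i => starRingEnd ℂ (ψ i)))
        (Submodule.subset_span ⟨_, rfl⟩)
      rw [PiLp.inner_apply] at h1
      simp only [hΨdef, RCLike.inner_apply, map_prod, map_pow, Complex.conj_conj] at h1
      exact (Finset.sum_congr rfl fun s _ => mul_comm _ _).trans h1
    have hP0 : (∑ s : Idm α m,
        MvPolynomial.monomial (Finsupp.equivFunOnFinite.symm ((s : α → ℕ))) (c s))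
        = (0 : MvPolynomial α ℂ) := by
      apply MvPolynomial.funext
      intro ψ
      rw [map_sum, map_zero]
      rw [← hc' ψ]
      refine Finset.sum_congr rfl fun s _ => ?_
      rw [MvPolynomial.eval_monomial]
      rw [Finsupp.prod_fintype _ _ (fun i => pow_zero _)]
      simp only [Finsupp.coe_equivFunOnFinite_symm]
      ring
    show c = 0
    ext s0
    have hco := congrArg
      (MvPolynomial.coeff (Finsupp.equivFunOnFinite.symm ((s0 : α → ℕ)))) hP0
    rw [MvPolynomial.coeff_sum] at hco
    simp only [MvPolynomial.coeff_monomial, MvPolynomial.coeff_zero] at hco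
    have hsum : ∑ s : Idm α m,
        (if (Finsupp.equivFunOnFinite.symm ((s : α → ℕ))
            = Finsupp.equivFunOnFinite.symm ((s0 : α → ℕ))) then c s else 0) = c s0 := by
      rw [Finset.sum_eq_single_of_mem s0 (Finset.mem_univ _)]
      · rw [if_pos rfl]
      · intro s _ hs
        rw [if_neg]
        intro h
        exact hs (Subtype.ext (Finsupp.equivFunOnFinite.symm.injective h))
    rw [hsum] at hco
    exact hco
  let w : Idm α m → EuclideanSpace ℂ (Fin m → α) := fun s =>
    (((Real.sqrt (Nat.multinomial Finset.univ ((s : α → ℕ))) : ℝ) : ℂ)) •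
      typeVec α m (s : α → ℕ)
  let L : EuclideanSpace ℂ (Idm α m) →ₗ[ℂ] EuclideanSpace ℂ (Fin m → α) :=
    { toFun := fun v => ∑ s : Idm α m, v s • w s
      map_add' := fun x y => by
        simp only [PiLp.add_apply, add_smul, Finset.sum_add_distrib]
      map_smul' := fun r x => by
        simp only [PiLp.smul_apply, smul_eq_mul, RingHom.id_apply, mul_smul, Finset.smul_sum] }
  have hLΨ : ∀ φ, L (Ψ φ) = tensPow α m φ := by
    intro φ
    rw [tensPow_eq_sum]
    show (∑ s : Idm α m, Ψ φ s • w s) = _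
    rw [← Finset.sum_coe_sort (Idm α m)
      (fun t => ((∏ i, φ i ^ t i) * ((Real.sqrt (Nat.multinomial Finset.univ t) : ℝ) : ℂ)) •
        typeVec α m t)]
    refine Finset.sum_congr rfl fun s _ => ?_
    simp only [hΨdef, w, smul_smul]
  have hx : typeVec α m t
      = L ((((Real.sqrt (Nat.multinomial Finset.univ t))⁻¹ : ℝ) : ℂ) •
          EuclideanSpace.single (⟨t, ht⟩ : Idm α m) (1:ℂ)) := by
    rw [map_smul]
    have hL1 : L (EuclideanSpace.single (⟨t, ht⟩ : Idm α m) (1:ℂ)) = w ⟨t, ht⟩ := by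
      show (∑ s : Idm α m, EuclideanSpace.single (⟨t, ht⟩ : Idm α m) (1:ℂ) s • w s) = w ⟨t, ht⟩
      rw [Finset.sum_eq_single_of_mem (⟨t, ht⟩ : Idm α m) (Finset.mem_univ _)]
      · rw [EuclideanSpace.single_apply, if_pos rfl, one_smul]
      · intro s _ hs
        rw [EuclideanSpace.single_apply, if_neg hs, zero_smul]
    rw [hL1]
    show _ = _ • (_ • typeVec α m t)
    rw [smul_smul, ← Complex.ofReal_mul,
      inv_mul_cancel₀ (sqrt_mult_pos (α := α) t).ne', Complex.ofReal_one, one_smul]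
  rw [hx]
  have hmem : ((((Real.sqrt (Nat.multinomial Finset.univ t))⁻¹ : ℝ) : ℂ) •
      EuclideanSpace.single (⟨t, ht⟩ : Idm α m) (1:ℂ)) ∈ Submodule.span ℂ (Set.range Ψ) := by
    rw [hspan]; trivial
  have hmap := Submodule.mem_map_of_mem (f := L) hmem
  rw [Submodule.map_span] at hmap
  have himg : L '' Set.range Ψ ⊆ Set.range (tensPow α m) := by
    rintro _ ⟨_, ⟨φ, rfl⟩, rfl⟩
    exact ⟨φ, (hLΨ φ).symm⟩
  exact Submodule.span_mono himg hmap

lemma mult_mul_inv_sqrt (t : α → ℕ) :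
    ((Nat.multinomial Finset.univ t : ℝ)) * (Real.sqrt (Nat.multinomial Finset.univ t))⁻¹
      = Real.sqrt (Nat.multinomial Finset.univ t) := by
  have h := (sqrt_mult_pos (α := α) t).ne'
  field_simp
  rw [Real.sq_sqrt (Nat.cast_nonneg _)]

lemma inner_typeVec_tensPow {m : ℕ} (t : α → ℕ) (ht : t ∈ Idm α m) (φ : α → ℂ) :
    (inner ℂ (typeVec α m t) (tensPow α m φ) : ℂ)
      = ((Real.sqrt (Nat.multinomial Finset.univ t) : ℝ) : ℂ) * ∏ i, φ i ^ t i := by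
  rw [PiLp.inner_apply]
  have h1 : ∀ a : Fin m → α,
      (inner ℂ (typeVec α m t a) (tensPow α m φ a) : ℂ)
        = if typeOf a = t
            then ((((Real.sqrt (Nat.multinomial Finset.univ t))⁻¹ : ℝ)) : ℂ) * ∏ i, φ i ^ t i
            else 0 := by
    intro a
    rw [RCLike.inner_apply]
    show (∏ k, φ (a k)) * (starRingEnd ℂ) (if typeOf a = t then _ else 0) = _
    by_cases h : typeOf a = t
    · rw [if_pos h, if_pos h, Complex.conj_ofReal, prod_pow_typeOf, h, mul_comm (∏ i, φ i ^ t i)]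
    · rw [if_neg h, if_neg h, map_zero, mul_zero]
  rw [Finset.sum_congr rfl (fun a _ => h1 a), Finset.sum_ite, Finset.sum_const,
    Finset.sum_const_zero, add_zero, card_typeOf t ((mem_Idm_iff t).mp ht), nsmul_eq_mul]
  rw [← mul_assoc]
  congr 1
  push_cast
  rw [← Complex.ofReal_natCast, ← Complex.ofReal_inv, ← Complex.ofReal_mul]
  exact congrArg _ (mult_mul_inv_sqrt t)

lemma orthProj_single {m : ℕ} (b : Fin m → α) :
    ((Submodule.orthogonalProjection (symSubspace α m) (EuclideanSpace.single b (1:ℂ)) :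
      symSubspace α m) : EuclideanSpace ℂ (Fin m → α))
      = ∑ t ∈ Idm α m, typeVec α m t b • typeVec α m t := by
  apply Submodule.eq_starProjection_of_mem_of_inner_eq_zero
  · exact Submodule.sum_smul_mem _ _ fun t htm => typeVec_mem_symSubspace t htm
  · intro w hw
    induction hw using Submodule.span_induction with
    | mem x hx =>
        obtain ⟨φ, rfl⟩ := hx
        rw [inner_sub_left, sub_eq_zero, EuclideanSpace.inner_single_left, map_one, one_mul]
        rw [sum_inner]
        have h2 : ∀ t ∈ Idm α m,
            (inner ℂ (typeVec α m t b • typeVec α m t) (tensPow α m φ) : ℂ)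
              = (if typeOf b = t
                  then ((((Real.sqrt (Nat.multinomial Finset.univ t))⁻¹ : ℝ)) : ℂ)
                  else 0) *
                (((Real.sqrt (Nat.multinomial Finset.univ t) : ℝ) : ℂ) * ∏ i, φ i ^ t i) := by
          intro t htm
          rw [inner_smul_left, inner_typeVec_tensPow t htm φ]
          congr 1
          show (starRingEnd ℂ) (if typeOf b = t then _ else 0) = _
          by_cases h : typeOf b = t
          · simp [h, Complex.conj_ofReal]
          · simp [h]
        rw [Finset.sum_congr rfl h2,
          Finset.sum_eq_single_of_mem (typeOf b) (typeOf_mem_Idm b)]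
        · rw [if_pos rfl, ← mul_assoc, ← Complex.ofReal_mul,
            inv_mul_cancel₀ (sqrt_mult_pos (α := α) (typeOf b)).ne',
            Complex.ofReal_one, one_mul]
          show (∏ k, φ (b k)) = _
          exact prod_pow_typeOf b φ
        · intro t _ hne
          rw [if_neg (fun h => hne h.symm), zero_mul]
    | zero => rw [inner_zero_right]
    | add x y hx hy ihx ihy => rw [inner_add_right, ihx, ihy, add_zero]
    | smul a x hx ih => rw [inner_smul_right, ih, mul_zero]

lemma symProj_apply {m : ℕ} (a b : Fin m → α) :
    symProj α m a b = ∑ t ∈ Idm α m, typeVec α m t a * typeVec α m t b := by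
  unfold symProj
  rw [orthProj_single, EuclideanSpace.inner_single_left, map_one, one_mul]
  rw [WithLp.ofLp_sum, Finset.sum_apply]
  refine Finset.sum_congr rfl fun t _ => ?_
  show typeVec α m t b * typeVec α m t a = _
  ring

lemma sqrt_pair (mp l M T : ℕ) (hl : 1 ≤ l) (hT : 1 ≤ T) (hmp : 1 ≤ mp)
    (h : T * l = mp * M) :
    Real.sqrt ((l:ℝ) / (mp:ℝ)) * (Real.sqrt (M:ℝ))⁻¹ = (Real.sqrt (T:ℝ))⁻¹ := by
  have hM : 0 < M := by
    rcases Nat.eq_zero_or_pos M with rfl | h0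
    · rw [mul_zero] at h
      have h2 := Nat.mul_pos hT hl
      omega
    · exact h0
  have hl' : (0:ℝ) < l := by exact_mod_cast hl
  have hT' : (0:ℝ) < T := by exact_mod_cast hT
  have hM' : (0:ℝ) < M := by exact_mod_cast hM
  have hmp' : (0:ℝ) < mp := by exact_mod_cast hmp
  have hcast : (T:ℝ) * l = (mp:ℝ) * M := by exact_mod_cast h
  rw [← Real.sqrt_inv, ← Real.sqrt_inv, ← Real.sqrt_mul (by positivity)]
  congr 1
  field_simp
  nlinarith [hcast]

variable {m : ℕ}

lemma basisTens_zero_a (k : α) (t : α → ℕ)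
    (a : Fin (m+1) → α) (ha : ¬ a 0 = k) : basisTensTypeVec α m k t a = 0 := by
  unfold basisTensTypeVec
  rw [if_neg ha, zero_mul]

lemma basisTens_star (k : α) (t : α → ℕ) (a : Fin (m+1) → α) :
    star (basisTensTypeVec α m k t a) = basisTensTypeVec α m k t a := by
  unfold basisTensTypeVec typeVec
  by_cases h1 : a 0 = k <;>
    by_cases h2 : typeOf (fun i : Fin m => a i.succ) = t <;>
      simp [h1, h2, Complex.conj_ofReal]

lemma basisTens_eq_zero_of_ne (k : α) (t : α → ℕ) (a : Fin (m+1) → α) (ha : a 0 = k)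
    (htk : 1 ≤ t k) (hne : t ≠ typeOf a) : basisTensTypeVec α m k (decr t k) a = 0 := by
  unfold basisTensTypeVec typeVec
  have hc : ¬ (typeOf (fun i : Fin m => a i.succ) = decr t k) := by
    intro c
    exact hne (typeOf_tail_eq a t (by rw [ha]; exact htk) (by rw [ha]; exact c)).symm
  simp only [WithLp.ofLp_toLp]
  rw [if_neg hc, mul_zero]

lemma basisTens_self (k : α) (a : Fin (m+1) → α) (ha : a 0 = k) :
    basisTensTypeVec α m k (decr (typeOf a) k) a
      = ((((Real.sqrt (Nat.multinomial Finset.univ (decr (typeOf a) k)))⁻¹ : ℝ)) : ℂ) := by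
  unfold basisTensTypeVec typeVec
  simp only [WithLp.ofLp_toLp]
  rw [if_pos ha, one_mul, if_pos (by rw [tail_typeOf_eq a, ha])]

end Aux

/-- **Compression of the symmetric projector on the first factor**: for `j ≠ j'`,
`(|j'⟩⟨j'| ⊗ I) Π_sym^{d,m+1} (|j⟩⟨j| ⊗ I)
  = |j'⟩⟨j| ⊗ Σ_{l,l'=1}^{m+1} √(l/(m+1))√(l'/(m+1))
      Σ_{t⃗ : t_{j'} = l', t_j = l} |s(t⃗_{-j'})⟩⟨s(t⃗_{-j})|`. -/
theorem symProj_firstFactor_compression (d m : ℕ) (j j' : Fin d) (hjj : j ≠ j') :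
    projFirst (Fin d) m j' * symProj (Fin d) (m+1) * projFirst (Fin d) m j
      = ∑ l ∈ Finset.Icc 1 (m+1), ∑ l' ∈ Finset.Icc 1 (m+1),
          ((Real.sqrt ((l : ℝ) / ((m : ℝ) + 1)) * Real.sqrt ((l' : ℝ) / ((m : ℝ) + 1)) : ℝ) : ℂ) •
            ∑ t ∈ (Idm (Fin d) (m+1)).filter (fun t => t j' = l' ∧ t j = l),
              Matrix.vecMulVec (basisTensTypeVec (Fin d) m j' (decr t j'))
                (star (basisTensTypeVec (Fin d) m j (decr t j))) := by
  ext a b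
  unfold projFirst
  rw [Matrix.mul_diagonal, Matrix.diagonal_mul]
  simp only [Matrix.sum_apply, Matrix.smul_apply, Matrix.vecMulVec_apply, Pi.star_apply,
    smul_eq_mul, basisTens_star]
  by_cases ha : a 0 = j'
  swap
  · rw [if_neg ha, zero_mul, zero_mul]
    symm
    refine Finset.sum_eq_zero fun l _ => Finset.sum_eq_zero fun l' _ => ?_
    rw [Finset.sum_eq_zero fun t _ => by rw [basisTens_zero_a _ _ _ ha, zero_mul], mul_zero]
  by_cases hb : b 0 = j
  swap
  · rw [if_neg hb, mul_zero]
    symm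
    refine Finset.sum_eq_zero fun l _ => Finset.sum_eq_zero fun l' _ => ?_
    rw [Finset.sum_eq_zero fun t _ => by rw [basisTens_zero_a _ _ _ hb, mul_zero], mul_zero]
  rw [if_pos ha, if_pos hb, one_mul, mul_one, symProj_apply]
  have hLHS : (∑ t ∈ Idm (Fin d) (m+1),
      typeVec (Fin d) (m+1) t a * typeVec (Fin d) (m+1) t b)
      = (if typeOf a = typeOf b
          then ((((Real.sqrt (Nat.multinomial Finset.univ (typeOf b)))⁻¹ : ℝ)) : ℂ) else 0)
        * ((((Real.sqrt (Nat.multinomial Finset.univ (typeOf b)))⁻¹ : ℝ)) : ℂ) := by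
    rw [Finset.sum_eq_single_of_mem (typeOf b) (typeOf_mem_Idm b)]
    · congr 1
      exact if_pos rfl
    · intro t _ hne
      rw [show typeVec (Fin d) (m+1) t b = 0 from if_neg (fun c => hne c.symm), mul_zero]
  rw [hLHS]
  by_cases hab : typeOf a = typeOf b
  · rw [if_pos hab]
    have hsb : ∑ i, typeOf b i = m + 1 := sum_typeOf b
    have hTj : 1 ≤ typeOf b j := by
      have := one_le_typeOf_self b; rwa [hb] at this
    have hTj' : 1 ≤ typeOf b j' := by
      have := one_le_typeOf_self a; rw [ha] at this; rwa [hab] at this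
    have hTj_le : typeOf b j ≤ m + 1 := by
      have := Finset.single_le_sum (f := typeOf b) (fun i _ => Nat.zero_le _)
        (Finset.mem_univ j)
      rwa [hsb] at this
    have hTj'_le : typeOf b j' ≤ m + 1 := by
      have := Finset.single_le_sum (f := typeOf b) (fun i _ => Nat.zero_le _)
        (Finset.mem_univ j')
      rwa [hsb] at this
    have hdj := multinomial_decr (typeOf b) hsb j hTj
    have hdj' := multinomial_decr (typeOf b) hsb j' hTj'
    have hG : ∀ l ∈ Finset.Icc 1 (m+1), ∀ l' ∈ Finset.Icc 1 (m+1),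
        (∑ t ∈ (Idm (Fin d) (m+1)).filter (fun t => t j' = l' ∧ t j = l),
          basisTensTypeVec (Fin d) m j' (decr t j') a
            * basisTensTypeVec (Fin d) m j (decr t j) b)
        = if typeOf b j = l ∧ typeOf b j' = l'
            then ((((Real.sqrt (Nat.multinomial Finset.univ (decr (typeOf b) j')))⁻¹ : ℝ)) : ℂ)
              * ((((Real.sqrt (Nat.multinomial Finset.univ (decr (typeOf b) j)))⁻¹ : ℝ)) : ℂ)
            else 0 := by
      intro l hl l' hl'
      rw [Finset.mem_Icc] at hl hl'
      by_cases hcond : typeOf b j = l ∧ typeOf b j' = l'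
      · rw [if_pos hcond]
        rw [Finset.sum_eq_single_of_mem (typeOf b)
          (Finset.mem_filter.mpr ⟨typeOf_mem_Idm b, hcond.2, hcond.1⟩)]
        · have e1 : basisTensTypeVec (Fin d) m j' (decr (typeOf b) j') a
              = ((((Real.sqrt (Nat.multinomial Finset.univ (decr (typeOf b) j')))⁻¹ : ℝ)) : ℂ) := by
            rw [← hab]; exact basisTens_self j' a ha
          rw [e1, basisTens_self j b hb]
        · intro t htf hne
          obtain ⟨htI, ht⟩ := Finset.mem_filter.mp htf
          rw [basisTens_eq_zero_of_ne j' t a ha (by rw [ht.1]; exact hl'.1)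
            (fun c => hne (c.trans hab)), zero_mul]
      · rw [if_neg hcond]
        refine Finset.sum_eq_zero fun t htf => ?_
        obtain ⟨htI, ht⟩ := Finset.mem_filter.mp htf
        by_cases hta : t = typeOf a
        · exfalso
          apply hcond
          have h2 : t = typeOf b := hta.trans hab
          rw [← h2]
          exact ⟨ht.2, ht.1⟩
        · rw [basisTens_eq_zero_of_ne j' t a ha (by rw [ht.1]; exact hl'.1) hta, zero_mul]
    rw [Finset.sum_congr rfl
      (fun l hl => Finset.sum_congr rfl (fun l' hl' => by rw [hG l hl l' hl']))]
    rw [Finset.sum_eq_single_of_mem (typeOf b j) (Finset.mem_Icc.mpr ⟨hTj, hTj_le⟩)]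
    · rw [Finset.sum_eq_single_of_mem (typeOf b j') (Finset.mem_Icc.mpr ⟨hTj', hTj'_le⟩)]
      · rw [if_pos ⟨rfl, rfl⟩]
        have e1 : Real.sqrt ((typeOf b j : ℝ) / ((m:ℝ)+1))
            * (Real.sqrt ((Nat.multinomial Finset.univ (decr (typeOf b) j) : ℕ) : ℝ))⁻¹
            = (Real.sqrt ((Nat.multinomial Finset.univ (typeOf b) : ℕ) : ℝ))⁻¹ := by
          have h := sqrt_pair (m+1) (typeOf b j)
            (Nat.multinomial Finset.univ (decr (typeOf b) j))
            (Nat.multinomial Finset.univ (typeOf b)) hTj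
            (Nat.multinomial_pos _ _) (by omega) hdj
          push_cast at h ⊢
          exact h
        have e2 : Real.sqrt ((typeOf b j' : ℝ) / ((m:ℝ)+1))
            * (Real.sqrt ((Nat.multinomial Finset.univ (decr (typeOf b) j') : ℕ) : ℝ))⁻¹
            = (Real.sqrt ((Nat.multinomial Finset.univ (typeOf b) : ℕ) : ℝ))⁻¹ := by
          have h := sqrt_pair (m+1) (typeOf b j')
            (Nat.multinomial Finset.univ (decr (typeOf b) j'))
            (Nat.multinomial Finset.univ (typeOf b)) hTj'
            (Nat.multinomial_pos _ _) (by omega) hdj'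
          push_cast at h ⊢
          exact h
        rw [← Complex.ofReal_mul, ← Complex.ofReal_mul, ← Complex.ofReal_mul]
        congr 1
        calc (Real.sqrt ((Nat.multinomial Finset.univ (typeOf b) : ℕ) : ℝ))⁻¹
              * (Real.sqrt ((Nat.multinomial Finset.univ (typeOf b) : ℕ) : ℝ))⁻¹
            = (Real.sqrt ((typeOf b j : ℝ) / ((m:ℝ)+1))
                * (Real.sqrt ((Nat.multinomial Finset.univ (decr (typeOf b) j) : ℕ) : ℝ))⁻¹)
              * (Real.sqrt ((typeOf b j' : ℝ) / ((m:ℝ)+1))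
                * (Real.sqrt ((Nat.multinomial Finset.univ (decr (typeOf b) j') : ℕ) : ℝ))⁻¹) := by
              rw [e1, e2]
          _ = Real.sqrt ((typeOf b j : ℝ) / ((m:ℝ)+1))
                * Real.sqrt ((typeOf b j' : ℝ) / ((m:ℝ)+1))
              * ((Real.sqrt ((Nat.multinomial Finset.univ (decr (typeOf b) j') : ℕ) : ℝ))⁻¹
                * (Real.sqrt ((Nat.multinomial Finset.univ (decr (typeOf b) j) : ℕ) : ℝ))⁻¹) := by
              ring
      · intro l' _ hne
        rw [if_neg (fun c => hne c.2.symm), mul_zero]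
    · intro l _ hne
      rw [Finset.sum_eq_zero fun l' _ => by rw [if_neg (fun c => hne c.1.symm), mul_zero]]
  · rw [if_neg hab, zero_mul]
    symm
    refine Finset.sum_eq_zero fun l hl => Finset.sum_eq_zero fun l' hl' => ?_
    rw [Finset.mem_Icc] at hl hl'
    rw [Finset.sum_eq_zero fun t htf => ?_, mul_zero]
    obtain ⟨htI, ht⟩ := Finset.mem_filter.mp htf
    by_cases hta : t = typeOf a
    · rw [basisTens_eq_zero_of_ne j t b hb (by rw [ht.2]; exact hl.1)
        (fun c => hab (hta.symm.trans c)), mul_zero]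
    · rw [basisTens_eq_zero_of_ne j' t a ha (by rw [ht.1]; exact hl'.1) hta, zero_mul]
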